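/- arXiv:1006.1414 — 3 statements merged into one kernel-verified Lean document; each statement's English description precedes it below -/
import Mathlib

section
/- If two initialized runs ρ, ρ' of Γ of the same length satisfy ρ ∼_A ρ', then the second components of the lifted runs in Γ̂_A agree at every position: writing ρ̂[i] = (ρ[i], S_i) and ρ̂'[i] = (ρ'[i], S'_i), we have S_i = S'_i for all i ≤ |ρ|. -/
/-- A game arena: transition relation over states `Q`, joint actions `Ag → Act`,
initial states, a labeling of states by atomic propositions `AP`, and for each
agent the set of atomic propositions it can observe. -/
structure Arena (Q Ag Act AP : Type) where
  delta : Q → (Ag → Act) → Q → Prop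
  init : Set Q
  label : Q → Set AP
  obs : Ag → Set AP

namespace Arena

variable {Q Ag Act AP : Type}

/-- `Prop_A`: the atomic propositions observable by coalition `A`. -/
def propA (G : Arena Q Ag Act AP) (A : Set Ag) : Set AP := ⋃ a ∈ A, G.obs a

/-- `λ_A(q) = λ(q) ∩ Prop_A`. -/
def labelA (G : Arena Q Ag Act AP) (A : Set Ag) (q : Q) : Set AP :=
  G.label q ∩ G.propA A

/-- An initialized infinite run of the arena. -/
structure InfRun (G : Arena Q Ag Act AP) where
  st : ℕ → Q
  ac : ℕ → Ag → Act
  init_mem : st 0 ∈ G.init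
  step : ∀ i, G.delta (st i) (ac i) (st (i + 1))

/-- The prefixes `ρ[0..i]` and `ρ'[0..i]` are `A`-indistinguishable. -/
def SimPrefix (G : Arena Q Ag Act AP) (A : Set Ag) (ρ ρ' : G.InfRun) (i : ℕ) : Prop :=
  (∀ j < i, ∀ a ∈ A, ρ.ac j a = ρ'.ac j a) ∧
  (∀ j ≤ i, G.labelA A (ρ.st j) = G.labelA A (ρ'.st j))

/-- Full `A`-indistinguishability of infinite runs. -/
def Sim (G : Arena Q Ag Act AP) (A : Set Ag) (ρ ρ' : G.InfRun) : Prop :=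
  (∀ j, ∀ a ∈ A, ρ.ac j a = ρ'.ac j a) ∧
  (∀ j, G.labelA A (ρ.st j) = G.labelA A (ρ'.st j))

/-- The `A`-observation history `λ_A(ρ[0]) ⋯ λ_A(ρ[i])`. -/
def obsHist (G : Arena Q Ag Act AP) (A : Set Ag) (ρ : G.InfRun) (i : ℕ) : List (Set AP) :=
  (List.range (i + 1)).map fun j => G.labelA A (ρ.st j)

/-- A strategy `σ` for coalition `A` is compatible with a run `ρ` iff at every
position the `A`-part of the action taken is the one prescribed by `σ` on the
`A`-observation history so far. -/
def Compatible (G : Arena Q Ag Act AP) (A : Set Ag)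
    (σ : List (Set AP) → Ag → Act) (ρ : G.InfRun) : Prop :=
  ∀ i, ∀ a ∈ A, σ (G.obsHist A ρ i) a = ρ.ac i a

/-- `out(S, c_A, Z)`: successors of states in `S` under some action agreeing with
`cA` on `A`, whose `A`-observation is `Z`. -/
def out (G : Arena Q Ag Act AP) (A : Set Ag) (S : Set Q) (cA : Ag → Act) (Z : Set AP) :
    Set Q :=
  {s' | ∃ s ∈ S, ∃ c : Ag → Act,
    (∀ a ∈ A, c a = cA a) ∧ G.delta s c s' ∧ G.labelA A s' = Z}

/-- The subset-construction arena `Γ̂_A`. -/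
def hatArena (G : Arena Q Ag Act AP) (A : Set Ag) : Arena (Q × Set Q) Ag Act AP where
  delta := fun p c p' =>
    G.delta p.1 c p'.1 ∧ p'.2 = G.out A p.2 c (G.labelA A p'.1)
  init := {p | p.1 ∈ G.init ∧ p.2 = {s ∈ G.init | G.labelA A s = G.labelA A p.1}}
  label := fun p => G.label p.1
  obs := G.obs

/-- The second components of the lift of a run `ρ` to `Γ̂_A`. -/
def liftS (G : Arena Q Ag Act AP) (A : Set Ag) (ρ : G.InfRun) : ℕ → Set Q
  | 0 => {s ∈ G.init | G.labelA A s = G.labelA A (ρ.st 0)}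
  | i + 1 => G.out A (G.liftS A ρ i) (ρ.ac i) (G.labelA A (ρ.st (i + 1)))

/-- The lift of an initialized run of `Γ` to `Γ̂_A`. -/
def lift (G : Arena Q Ag Act AP) (A : Set Ag) (ρ : G.InfRun) : (G.hatArena A).InfRun where
  st := fun i => (ρ.st i, G.liftS A ρ i)
  ac := ρ.ac
  init_mem := ⟨ρ.init_mem, rfl⟩
  step := fun i => ⟨ρ.step i, rfl⟩

end Arena


/-- if `ρ[0..n] ∼_A ρ'[0..n]` then the second components of the
lifted runs agree at every position `i ≤ n`. -/
theorem liftS_eq_of_simPrefix {Q Ag Act AP : Type} (G : Arena Q Ag Act AP)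
    (A : Set Ag) (ρ ρ' : G.InfRun) (n : ℕ)
    (hsim : G.SimPrefix A ρ ρ' n) :
    ∀ i ≤ n, G.liftS A ρ i = G.liftS A ρ' i := by
  obtain ⟨hac, hlab⟩ := hsim
  intro i hi
  induction i with
  | zero =>
    simp only [Arena.liftS, hlab 0 (Nat.zero_le n)]
  | succ k ih =>
    have hk := ih (Nat.le_of_succ_le hi)
    simp only [Arena.liftS, hk, hlab (k+1) hi]
    ext s'
    constructor <;>
      rintro ⟨s, hs, c, hc, hd, hl⟩ <;>
      exact ⟨s, hs, c, fun a ha => by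
        rw [hc a ha]; first | exact hac k (Nat.lt_of_succ_le hi) a ha
                            | exact (hac k (Nat.lt_of_succ_le hi) a ha).symm,
        hd, hl⟩
end

section
/- For any initialized run ρ of Γ with lift ρ̂ in Γ̂_A and ρ̂[i] = (q_i, S_i): the second component S_i equals exactly the set of states r ∈ Q such that there is an initialized run ρ' of Γ of length i with ρ'[0..i] ∼_A ρ[0..i] and ρ'[i] = r. -/
namespace Arena

variable {Q Ag Act AP : Type}

/-- An initialized finite run of length `n` (transitions for `i < n`). -/
structure FinRun (G : Arena Q Ag Act AP) (n : ℕ) where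
  st : ℕ → Q
  ac : ℕ → Ag → Act
  init_mem : st 0 ∈ G.init
  step : ∀ i < n, G.delta (st i) (ac i) (st (i + 1))

end Arena

/-- the second component `S_i` of the lift of `ρ` is exactly the
set of states `r` reachable at position `i` by some initialized run of length
`i` whose prefix is `A`-indistinguishable from `ρ[0..i]`. -/
theorem liftS_eq_indist_states {Q Ag Act AP : Type} (G : Arena Q Ag Act AP)
    (A : Set Ag) (ρ : G.InfRun) (i : ℕ) :
    G.liftS A ρ i =
      {r : Q | ∃ ρ' : G.FinRun i,
        (∀ j < i, ∀ a ∈ A, ρ'.ac j a = ρ.ac j a) ∧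
        (∀ j ≤ i, G.labelA A (ρ'.st j) = G.labelA A (ρ.st j)) ∧
        ρ'.st i = r} := by
  induction i with
  | zero =>
    ext r
    constructor
    · rintro ⟨hinit, hlab⟩
      exact ⟨⟨fun _ => r, ρ.ac, hinit, fun j hj => absurd hj (Nat.not_lt_zero j)⟩,
        fun j hj => absurd hj (Nat.not_lt_zero j),
        fun j hj => by simpa [Nat.le_zero.mp hj] using hlab, rfl⟩
    · rintro ⟨ρ', -, hlab, hr⟩
      exact ⟨hr ▸ (by simpa using ρ'.init_mem : ρ'.st 0 ∈ G.init),
        hr ▸ (by simpa using hlab 0 (le_refl 0))⟩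
  | succ i ih =>
    ext r
    constructor
    · rintro ⟨s, hs, c, hcA, hdel, hlab⟩
      rw [ih] at hs
      obtain ⟨ρ', hac, hl, hst⟩ := hs
      refine ⟨⟨fun j => if j ≤ i then ρ'.st j else r,
        fun j => if j = i then c else ρ'.ac j, by simpa using ρ'.init_mem, ?_⟩, ?_, ?_, ?_⟩
      · intro j hj
        rcases Nat.lt_succ_iff_lt_or_eq.mp hj with hj' | rfl
        · simpa [hj'.le, Nat.succ_le_of_lt hj', hj'.ne] using ρ'.step j hj'
        · simpa [Nat.not_succ_le_self, hst] using hdel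
      · intro j hj a ha
        rcases Nat.lt_succ_iff_lt_or_eq.mp hj with hj' | rfl
        · simpa [hj'.ne] using hac j hj' a ha
        · simpa using hcA a ha
      · intro j hj
        rcases Nat.lt_succ_iff_lt_or_eq.mp (Nat.lt_succ_of_le hj) with hj' | rfl
        · simpa [Nat.le_of_lt_succ hj'] using hl j (Nat.le_of_lt_succ hj')
        · simpa [Nat.not_succ_le_self] using hlab
      · simp [Nat.not_succ_le_self]
    · rintro ⟨ρ', hac, hl, hr⟩
      refine ⟨ρ'.st i, ?_, ρ'.ac i, fun a ha => hac i (Nat.lt_succ_self i) a ha,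
        hr ▸ ρ'.step i (Nat.lt_succ_self i), hr ▸ hl (i + 1) (le_refl _)⟩
      rw [ih]
      exact ⟨⟨ρ'.st, ρ'.ac, ρ'.init_mem, fun j hj => ρ'.step j (Nat.lt_succ_of_lt hj)⟩,
        fun j hj a ha => hac j (Nat.lt_succ_of_lt hj) a ha,
        fun j hj => hl j (Nat.le_succ_of_le hj), rfl⟩
end

section
/- In any game arena, for any initialized infinite run ρ, position i, coalition A, and atomic proposition p: (Γ, ρ, i) ⊨ K_A p if and only if p ∈ λ(s) for every s in the second component of ρ̂[i], where ρ̂ is the lift of ρ in the subset arena Γ̂_A. -/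
namespace Arena

variable {Q Ag Act AP : Type}

noncomputable def baseSt (G : Arena Q Ag Act AP)
    (hser : ∀ q : Q, ∀ c : Ag → Act, ∃ q' : Q, G.delta q c q')
    (ac : ℕ → Ag → Act) (s : Q) : ℕ → Q
  | 0 => s
  | n + 1 => (hser (G.baseSt hser ac s n) (ac n)).choose

noncomputable def baseRun (G : Arena Q Ag Act AP)
    (hser : ∀ q : Q, ∀ c : Ag → Act, ∃ q' : Q, G.delta q c q')
    (ac : ℕ → Ag → Act) (s : Q) (hs : s ∈ G.init) : G.InfRun where
  st := G.baseSt hser ac s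
  ac := ac
  init_mem := hs
  step := fun n => (hser (G.baseSt hser ac s n) (ac n)).choose_spec

noncomputable def extSt (G : Arena Q Ag Act AP)
    (hser : ∀ q : Q, ∀ c : Ag → Act, ∃ q' : Q, G.delta q c q')
    (ρ' : G.InfRun) (i : ℕ) (c : Ag → Act) (s : Q) (acext : ℕ → Ag → Act) : ℕ → Q
  | 0 => ρ'.st 0
  | n + 1 =>
    if n < i then ρ'.st (n + 1)
    else if n = i then s
    else (hser (G.extSt hser ρ' i c s acext n) (acext n)).choose

def extAc {G : Arena Q Ag Act AP} (ρ' : G.InfRun) (i : ℕ) (c : Ag → Act)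
    (acext : ℕ → Ag → Act) : ℕ → Ag → Act :=
  fun j => if j < i then ρ'.ac j else if j = i then c else acext j

lemma extSt_of_le (G : Arena Q Ag Act AP)
    (hser : ∀ q : Q, ∀ c : Ag → Act, ∃ q' : Q, G.delta q c q')
    (ρ' : G.InfRun) (i : ℕ) (c : Ag → Act) (s : Q) (acext : ℕ → Ag → Act) :
    ∀ n ≤ i, G.extSt hser ρ' i c s acext n = ρ'.st n := by
  intro n hn
  cases n with
  | zero => rfl
  | succ m =>
      have : m < i := hn
      simp [extSt, this]

lemma extSt_succ_i (G : Arena Q Ag Act AP)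
    (hser : ∀ q : Q, ∀ c : Ag → Act, ∃ q' : Q, G.delta q c q')
    (ρ' : G.InfRun) (i : ℕ) (c : Ag → Act) (s : Q) (acext : ℕ → Ag → Act) :
    G.extSt hser ρ' i c s acext (i + 1) = s := by
  simp [extSt]

noncomputable def extRun (G : Arena Q Ag Act AP)
    (hser : ∀ q : Q, ∀ c : Ag → Act, ∃ q' : Q, G.delta q c q')
    (ρ' : G.InfRun) (i : ℕ) (c : Ag → Act) (s : Q) (acext : ℕ → Ag → Act)
    (hdel : G.delta (ρ'.st i) c s) : G.InfRun where
  st := G.extSt hser ρ' i c s acext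
  ac := extAc ρ' i c acext
  init_mem := ρ'.init_mem
  step := by
    intro n
    rcases lt_trichotomy n i with hn | hn | hn
    · have h1 : G.extSt hser ρ' i c s acext n = ρ'.st n :=
        G.extSt_of_le hser ρ' i c s acext n hn.le
      have h2 : G.extSt hser ρ' i c s acext (n + 1) = ρ'.st (n + 1) := by
        simp [extSt, hn]
      rw [h1, h2]
      simpa [extAc, hn] using ρ'.step n
    · subst hn
      have h1 : G.extSt hser ρ' n c s acext n = ρ'.st n :=
        G.extSt_of_le hser ρ' n c s acext n le_rfl
      have h2 : G.extSt hser ρ' n c s acext (n + 1) = s := by simp [extSt]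
      rw [h1, h2]
      simpa [extAc] using hdel
    · have h2 : G.extSt hser ρ' i c s acext (n + 1)
          = (hser (G.extSt hser ρ' i c s acext n) (acext n)).choose := by
        simp [extSt, hn.not_gt, hn.ne']
      rw [h2]
      have hac : extAc ρ' i c acext n = acext n := by
        simp [extAc, hn.not_gt, hn.ne']
      rw [hac]
      exact (hser (G.extSt hser ρ' i c s acext n) (acext n)).choose_spec

lemma simPrefix_mono {G : Arena Q Ag Act AP} {A : Set Ag} {ρ ρ' : G.InfRun} {i : ℕ}
    (h : G.SimPrefix A ρ' ρ (i + 1)) : G.SimPrefix A ρ' ρ i :=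
  ⟨fun j hj => h.1 j (hj.trans (Nat.lt_succ_self i)),
   fun j hj => h.2 j (hj.trans (Nat.le_succ i))⟩

lemma simPrefix_mem_liftS {G : Arena Q Ag Act AP} {A : Set Ag} {ρ : G.InfRun} :
    ∀ i (ρ' : G.InfRun), G.SimPrefix A ρ' ρ i → ρ'.st i ∈ G.liftS A ρ i := by
  intro i
  induction i with
  | zero =>
      intro ρ' h
      exact ⟨ρ'.init_mem, h.2 0 le_rfl⟩
  | succ i ih =>
      intro ρ' h
      refine ⟨ρ'.st i, ih ρ' (simPrefix_mono h), ρ'.ac i, ?_, ρ'.step i, h.2 (i + 1) le_rfl⟩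
      intro a ha
      exact h.1 i (Nat.lt_succ_self i) a ha

lemma mem_liftS_exists {G : Arena Q Ag Act AP} {A : Set Ag} {ρ : G.InfRun}
    (hser : ∀ q : Q, ∀ c : Ag → Act, ∃ q' : Q, G.delta q c q') :
    ∀ i, ∀ s ∈ G.liftS A ρ i, ∃ ρ' : G.InfRun, G.SimPrefix A ρ' ρ i ∧ ρ'.st i = s := by
  intro i
  induction i with
  | zero =>
      rintro s ⟨hs, hlab⟩
      refine ⟨G.baseRun hser ρ.ac s hs, ⟨?_, ?_⟩, rfl⟩
      · intro j hj; omega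
      · intro j hj
        interval_cases j
        exact hlab
  | succ i ih =>
      rintro s ⟨t, ht, c, hcA, hdel, hlab⟩
      obtain ⟨ρ', hsim, hst⟩ := ih t ht
      have hdel' : G.delta (ρ'.st i) c s := hst ▸ hdel
      refine ⟨G.extRun hser ρ' i c s ρ.ac hdel', ⟨?_, ?_⟩, G.extSt_succ_i hser ρ' i c s ρ.ac⟩
      · intro j hj a ha
        rcases lt_or_eq_of_le (Nat.lt_succ_iff.mp hj) with hji | hji
        · have : (G.extRun hser ρ' i c s ρ.ac hdel').ac j a = ρ'.ac j a := by
            simp [extRun, extAc, hji]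
          rw [this]; exact hsim.1 j hji a ha
        · subst hji
          have : (G.extRun hser ρ' j c s ρ.ac hdel').ac j a = c a := by
            simp [extRun, extAc]
          rw [this]; exact hcA a ha
      · intro j hj
        rcases lt_or_eq_of_le hj with hji | hji
        · have hji' : j ≤ i := Nat.lt_succ_iff.mp hji
          have : (G.extRun hser ρ' i c s ρ.ac hdel').st j = ρ'.st j :=
            G.extSt_of_le hser ρ' i c s ρ.ac j hji'
          rw [this]; exact hsim.2 j hji'
        · subst hji
          have : (G.extRun hser ρ' i c s ρ.ac hdel').st (i + 1) = s :=
            G.extSt_succ_i hser ρ' i c s ρ.ac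
          rw [this]
          exact hlab

end Arena

/-- assuming every state has an outgoing transition for every
action tuple, `(Γ, ρ, i) ⊨ K_A p` iff `p ∈ λ(s)` for every `s` in the second
component of `ρ̂[i]` (that is, `s ∈ S_i = liftS A ρ i`). -/
theorem knowledge_iff_liftS {Q Ag Act AP : Type} (G : Arena Q Ag Act AP)
    (A : Set Ag) (p : AP) (ρ : G.InfRun) (i : ℕ)
    (hser : ∀ q : Q, ∀ c : Ag → Act, ∃ q' : Q, G.delta q c q') :
    (∀ ρ' : G.InfRun, G.SimPrefix A ρ' ρ i → p ∈ G.label (ρ'.st i)) ↔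
      ∀ s ∈ G.liftS A ρ i, p ∈ G.label s := by
  constructor
  · intro h s hs
    obtain ⟨ρ', hsim, hst⟩ := Arena.mem_liftS_exists hser i s hs
    exact hst ▸ h ρ' hsim
  · intro h ρ' hsim
    exact h (ρ'.st i) (Arena.simPrefix_mem_liftS i ρ' hsim)
end
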